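/- Let (X,d) be a complete, locally compact length (geodesic) metric space and let M ⊆ X be an open geodesically convex subset (every geodesic with endpoints in M lies in M, and any two points of M are joined by a geodesic). Then for every compact set C ⊆ M, the closure of the geodesic hull of C (the union of all geodesics with both endpoints in C) is contained in M. -/

import Mathlib

open Set

variable {X : Type*}

/-- A (constant-speed, minimising) geodesic parametrised on `[0,1]`. -/
def IsGeodesicCurve [MetricSpace X] (γ : ℝ → X) : Prop :=
  ∀ s ∈ Icc (0 : ℝ) 1, ∀ t ∈ Icc (0 : ℝ) 1,
    dist (γ s) (γ t) = |t - s| * dist (γ 0) (γ 1)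

/-- The geodesic hull of a set: the union of (the images on `[0,1]` of) all
geodesics with both endpoints in the set. -/
def geodesicHull [MetricSpace X] (C : Set X) : Set X :=
  {p | ∃ γ : ℝ → X, IsGeodesicCurve γ ∧ γ 0 ∈ C ∧ γ 1 ∈ C ∧ ∃ t ∈ Icc (0 : ℝ) 1, γ t = p}

/-- If `p` lies metrically between `a, b ∈ M` (with ratio `t`), then `p ∈ M`,
by concatenating geodesics `a → p` and `p → b` into a geodesic `a → b`. -/
theorem between_mem_of_convex [MetricSpace X]
    (hgeo : ∀ p q : X, ∃ γ : ℝ → X, IsGeodesicCurve γ ∧ γ 0 = p ∧ γ 1 = q)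
    (M : Set X)
    (hMconv : ∀ γ : ℝ → X, IsGeodesicCurve γ → γ 0 ∈ M → γ 1 ∈ M →
      ∀ t ∈ Icc (0 : ℝ) 1, γ t ∈ M)
    {a b p : X} (ha : a ∈ M) (hb : b ∈ M) {t : ℝ} (ht : t ∈ Icc (0:ℝ) 1)
    (h1 : dist a p = t * dist a b) (h2 : dist p b = (1 - t) * dist a b) :
    p ∈ M := by
  rcases eq_or_lt_of_le ht.1 with ht0 | ht0
  · have hap : dist a p = 0 := by rw [h1, ← ht0]; ring
    rw [dist_eq_zero] at hap
    rw [← hap]; exact ha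
  rcases eq_or_lt_of_le ht.2 with ht1 | ht1
  · have hpb : dist p b = 0 := by rw [h2, ht1]; ring
    rw [dist_eq_zero] at hpb
    rw [hpb]; exact hb
  -- now 0 < t < 1
  set D := dist a b with hD
  obtain ⟨γ₁, hγ₁, hγ₁0, hγ₁1⟩ := hgeo a p
  obtain ⟨γ₂, hγ₂, hγ₂0, hγ₂1⟩ := hgeo p b
  set γ : ℝ → X := fun s => if s ≤ t then γ₁ (s / t) else γ₂ ((s - t) / (1 - t)) with hγdef
  have h1t : (0:ℝ) < 1 - t := by linarith
  have hDγ₁ : dist (γ₁ 0) (γ₁ 1) = t * D := by rw [hγ₁0, hγ₁1]; exact h1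
  have hDγ₂ : dist (γ₂ 0) (γ₂ 1) = (1 - t) * D := by rw [hγ₂0, hγ₂1]; exact h2
  have hγ0 : γ 0 = a := by
    simp only [hγdef, if_pos ht0.le, zero_div, hγ₁0]
  have hγ1 : γ 1 = b := by
    simp only [hγdef, if_neg (not_le.2 ht1)]
    rw [div_self (ne_of_gt h1t), hγ₂1]
  have hγt : γ t = p := by
    simp only [hγdef, if_pos le_rfl]
    rw [div_self (ne_of_gt ht0), hγ₁1]
  have key : ∀ s ∈ Icc (0:ℝ) 1, ∀ u ∈ Icc (0:ℝ) 1, s ≤ u →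
      dist (γ s) (γ u) = (u - s) * D := by
    intro s hs u hu hsu
    rcases le_or_gt u t with hut | hut
    · -- both points in the first piece
      have hst : s ≤ t := hsu.trans hut
      simp only [hγdef, if_pos hst, if_pos hut]
      rw [hγ₁ (s/t) ⟨div_nonneg hs.1 ht0.le, (div_le_one ht0).2 hst⟩
            (u/t) ⟨div_nonneg (hs.1.trans hsu) ht0.le, (div_le_one ht0).2 hut⟩, hDγ₁,
        abs_of_nonneg (sub_nonneg.2 (by gcongr))]
      field_simp
    rcases lt_or_ge t s with hts | hts
    · -- both points in the second piece
      simp only [hγdef, if_neg (not_le.2 hts), if_neg (not_le.2 (hts.trans_le hsu))]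
      rw [hγ₂ ((s - t)/(1 - t)) ⟨div_nonneg (by linarith) h1t.le, (div_le_one h1t).2 (by linarith [hs.2])⟩
            ((u - t)/(1 - t)) ⟨div_nonneg (by linarith) h1t.le, (div_le_one h1t).2 (by linarith [hu.2])⟩,
        hDγ₂, abs_of_nonneg (sub_nonneg.2 (by gcongr <;> linarith))]
      field_simp
      ring
    · -- mixed case : s ≤ t < u
      have d1 : dist (γ s) p = (t - s) * D := by
        simp only [hγdef, if_pos hts]
        rw [← hγ₁1, hγ₁ (s/t) ⟨div_nonneg hs.1 ht0.le, (div_le_one ht0).2 hts⟩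
              1 ⟨zero_le_one, le_rfl⟩, hDγ₁,
          abs_of_nonneg (by rw [sub_nonneg, div_le_one ht0]; exact hts)]
        field_simp
      have d2 : dist p (γ u) = (u - t) * D := by
        simp only [hγdef, if_neg (not_le.2 hut)]
        rw [← hγ₂0, hγ₂ 0 ⟨le_rfl, zero_le_one⟩
              ((u - t)/(1 - t)) ⟨div_nonneg (by linarith) h1t.le, (div_le_one h1t).2 (by linarith [hu.2])⟩,
          hDγ₂, abs_of_nonneg (by rw [sub_zero]; exact div_nonneg (by linarith) h1t.le), sub_zero]
        field_simp
      have d3 : dist a (γ s) = s * D := by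
        simp only [hγdef, if_pos hts]
        rw [← hγ₁0, hγ₁ 0 ⟨le_rfl, zero_le_one⟩
              (s/t) ⟨div_nonneg hs.1 ht0.le, (div_le_one ht0).2 hts⟩, hDγ₁,
          abs_of_nonneg (by rw [sub_zero]; exact div_nonneg hs.1 ht0.le), sub_zero]
        field_simp
      have d4 : dist (γ u) b = (1 - u) * D := by
        simp only [hγdef, if_neg (not_le.2 hut)]
        rw [← hγ₂1, hγ₂ ((u - t)/(1 - t)) ⟨div_nonneg (by linarith) h1t.le, (div_le_one h1t).2 (by linarith [hu.2])⟩
              1 ⟨zero_le_one, le_rfl⟩, hDγ₂,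
          abs_of_nonneg (by rw [sub_nonneg, div_le_one h1t]; linarith [hu.2])]
        field_simp
        ring
      have hle : dist (γ s) (γ u) ≤ (u - s) * D := by
        calc dist (γ s) (γ u) ≤ dist (γ s) p + dist p (γ u) := dist_triangle _ _ _
          _ = (u - s) * D := by rw [d1, d2]; ring
      have hge : (u - s) * D ≤ dist (γ s) (γ u) := by
        have := dist_triangle4 a (γ s) (γ u) b
        rw [d3, d4, ← hD] at this
        linarith
      linarith
  have hγgeo : IsGeodesicCurve γ := by
    intro s hs u hu
    rw [hγ0, hγ1, ← hD]
    rcases le_total s u with h | h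
    · rw [key s hs u hu h, abs_of_nonneg (sub_nonneg.2 h)]
    · rw [dist_comm, key u hu s hs h, abs_of_nonpos (sub_nonpos.2 h)]; ring
  have := hMconv γ hγgeo (by rw [hγ0]; exact ha) (by rw [hγ1]; exact hb) t ⟨ht0.le, ht1.le⟩
  rwa [hγt] at this

/-- In a complete, locally compact geodesic metric space, if `M` is an open
geodesically convex subset, then for every compact `C ⊆ M` the closure of the
geodesic hull of `C` is contained in `M`. -/
theorem closure_geodesicHull_subset [MetricSpace X] [CompleteSpace X]
    [LocallyCompactSpace X]
    (hgeo : ∀ p q : X, ∃ γ : ℝ → X, IsGeodesicCurve γ ∧ γ 0 = p ∧ γ 1 = q)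
    (M : Set X) (hMopen : IsOpen M)
    (hMconv : ∀ γ : ℝ → X, IsGeodesicCurve γ → γ 0 ∈ M → γ 1 ∈ M →
      ∀ t ∈ Icc (0 : ℝ) 1, γ t ∈ M)
    (C : Set X) (hC : IsCompact C) (hCM : C ⊆ M) :
    closure (geodesicHull C) ⊆ M := by
  intro p hp
  rcases mem_closure_iff_seq_limit.1 hp with ⟨x, hx, hxp⟩
  choose γ hγ hγ0 hγ1 t ht hγt using hx
  set a : ℕ → X := fun n => γ n 0 with ha'
  set b : ℕ → X := fun n => γ n 1 with hb'
  obtain ⟨A, hAC, φ₁, hφ₁, hA⟩ := hC.tendsto_subseq (x := a) hγ0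
  obtain ⟨B, hBC, φ₂, hφ₂, hB⟩ := hC.tendsto_subseq (x := fun n => b (φ₁ n)) (fun n => hγ1 (φ₁ n))
  obtain ⟨T, hT, φ₃, hφ₃, hTt⟩ :=
    isCompact_Icc.tendsto_subseq (x := fun n => t (φ₁ (φ₂ n))) (fun n => ht (φ₁ (φ₂ n)))
  set ψ : ℕ → ℕ := fun n => φ₁ (φ₂ (φ₃ n)) with hψ'
  have hψa : Filter.Tendsto (fun n => a (ψ n)) Filter.atTop (nhds A) :=
    hA.comp ((hφ₂.comp hφ₃).tendsto_atTop)
  have hψb : Filter.Tendsto (fun n => b (ψ n)) Filter.atTop (nhds B) :=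
    hB.comp hφ₃.tendsto_atTop
  have hψt : Filter.Tendsto (fun n => t (ψ n)) Filter.atTop (nhds T) := hTt
  have hψx : Filter.Tendsto (fun n => x (ψ n)) Filter.atTop (nhds p) :=
    hxp.comp ((hφ₁.comp (hφ₂.comp hφ₃)).tendsto_atTop)
  have e1 : ∀ n, dist (a n) (x n) = t n * dist (a n) (b n) := by
    intro n
    have h := hγ n 0 ⟨le_rfl, zero_le_one⟩ (t n) (ht n)
    rw [hγt n, sub_zero, abs_of_nonneg (ht n).1] at h
    exact h
  have e2 : ∀ n, dist (x n) (b n) = (1 - t n) * dist (a n) (b n) := by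
    intro n
    have h := hγ n (t n) (ht n) 1 ⟨zero_le_one, le_rfl⟩
    rw [hγt n, abs_of_nonneg (by linarith [(ht n).2] : (0:ℝ) ≤ 1 - t n)] at h
    exact h
  have l1 : Filter.Tendsto (fun n => dist (a (ψ n)) (x (ψ n))) Filter.atTop
      (nhds (T * dist A B)) := by
    simp only [e1]
    exact hψt.mul (hψa.dist hψb)
  have h1 : dist A p = T * dist A B := tendsto_nhds_unique (hψa.dist hψx) l1
  have l2 : Filter.Tendsto (fun n => dist (x (ψ n)) (b (ψ n))) Filter.atTop
      (nhds ((1 - T) * dist A B)) := by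
    simp only [e2]
    exact (tendsto_const_nhds.sub hψt).mul (hψa.dist hψb)
  have h2 : dist p B = (1 - T) * dist A B := tendsto_nhds_unique (hψx.dist hψb) l2
  exact between_mem_of_convex hgeo M hMconv (hCM hAC) (hCM hBC) hT h1 h2
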